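/- Let (p,q) be a P_III Bäcklund lattice with data (t,a1,a2). Then: (a) if a1+l ≠ 0 for all l ∈ ℤ, the function u(l,m) = −(p(l,m)−1)·q(l,m)/(a1+l) − 1 satisfies the discrete Volterra equation in product form; (b) if a2+l ≠ 0 for all l ∈ ℤ, the function u(l,m) = −p(m,l)·q(m,l)/(a2+l) − 1 satisfies the discrete Volterra equation in product form. -/

import Mathlib

/-- Special solutions of the discrete Volterra equation (product form) from a
P_III Bäcklund lattice. -/
theorem dVolterra_solutions_from_PIII_lattice
    (t a1 a2 : ℂ) (ht : t ≠ 0)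
    (p q : ℤ → ℤ → ℂ)
    (hq : ∀ k1 k2 : ℤ, q k1 k2 ≠ 0)
    (hden1 : ∀ k1 k2 : ℤ, (a1 + (k1 : ℂ)) + q k1 k2 * (p k1 k2 - 1) ≠ 0)
    (hden2 : ∀ k1 k2 : ℤ, p k1 k2 * q k1 k2 + (a2 + (k2 : ℂ)) ≠ 0)
    (hR1 : ∀ k1 k2 : ℤ, q (k1+1) k2 =
      t * (p k1 k2 - 1) / ((a1 + (k1 : ℂ)) + q k1 k2 * (p k1 k2 - 1)))
    (hR2 : ∀ k1 k2 : ℤ, p (k1+1) k2 =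
      - t * p k1 k2 / (q (k1+1) k2) ^ 2 - (a2 + (k2 : ℂ)) / q (k1+1) k2)
    (hR3 : ∀ k1 k2 : ℤ, q k1 (k2+1) =
      - t * p k1 k2 / (p k1 k2 * q k1 k2 + (a2 + (k2 : ℂ))))
    (hR4 : ∀ k1 k2 : ℤ, p k1 (k2+1) =
      t * (p k1 k2 - 1) / (q k1 (k2+1)) ^ 2 - (a1 + (k1 : ℂ)) / q k1 (k2+1) + 1)
    :
    ((∀ l : ℤ, a1 + (l : ℂ) ≠ 0) →
      ∀ u : ℤ → ℤ → ℂ,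
        (∀ l m : ℤ, u l m = -((p l m - 1) * q l m) / (a1 + (l : ℂ)) - 1) →
        ∀ l m : ℤ, u (l+1) (m+1) * (1 + u l (m+1)) = u l m * (1 + u (l+1) m)) ∧
    ((∀ l : ℤ, a2 + (l : ℂ) ≠ 0) →
      ∀ u : ℤ → ℤ → ℂ,
        (∀ l m : ℤ, u l m = -(p m l * q m l) / (a2 + (l : ℂ)) - 1) →
        ∀ l m : ℤ, u (l+1) (m+1) * (1 + u l (m+1)) = u l m * (1 + u (l+1) m)) := by
  constructor
  · intro hA u hu l m
    -- cleared form of R1 at (l,m)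
    have K1 : q (l+1) m * ((a1 + (l:ℂ)) + q l m * (p l m - 1)) = t * (p l m - 1) := by
      rw [hR1 l m]; exact div_mul_cancel₀ _ (hden1 l m)
    -- cleared form of R1 at (l, m+1)
    have K1' : q (l+1) (m+1) * ((a1 + (l:ℂ)) + q l (m+1) * (p l (m+1) - 1))
        = t * (p l (m+1) - 1) := by
      rw [hR1 l (m+1)]; exact div_mul_cancel₀ _ (hden1 l (m+1))
    -- cleared form of R4 at (l,m)
    have K4 : (p l (m+1) - 1) * (q l (m+1))^2
        = t * (p l m - 1) - (a1 + (l:ℂ)) * q l (m+1) := by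
      have h := hR4 l m
      field_simp [hq l (m+1)] at h
      have h3 : (p l (m+1) - 1) * (q l (m+1))^2 * q l (m+1)
          = (t * (p l m - 1) - (a1 + (l:ℂ)) * q l (m+1)) * q l (m+1) := by
        linear_combination q l (m+1) * h
      exact mul_right_cancel₀ (hq l (m+1)) h3
    -- cleared form of R4 at (l+1, m)
    have K2 : (p (l+1) (m+1) - 1) * (q (l+1) (m+1))^2
        = t * (p (l+1) m - 1) - (a1 + (l:ℂ) + 1) * q (l+1) (m+1) := by
      have h := hR4 (l+1) m
      push_cast at h
      field_simp [hq (l+1) (m+1)] at h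
      have h3 : (p (l+1) (m+1) - 1) * (q (l+1) (m+1))^2 * q (l+1) (m+1)
          = (t * (p (l+1) m - 1) - (a1 + (l:ℂ) + 1) * q (l+1) (m+1)) * q (l+1) (m+1) := by
        linear_combination q (l+1) (m+1) * h
      exact mul_right_cancel₀ (hq (l+1) (m+1)) h3
    -- key identity
    have K3 : q (l+1) (m+1) * (p l m - 1) = (p l (m+1) - 1) * q l (m+1) := by
      have h : t * (q (l+1) (m+1) * (p l m - 1)) = t * ((p l (m+1) - 1) * q l (m+1)) := by
        linear_combination q l (m+1) * K1' - q (l+1) (m+1) * K4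
      exact mul_left_cancel₀ ht h
    have hA1 := hA l
    have hA2 : a1 + (l:ℂ) + 1 ≠ 0 := by
      have := hA (l+1); push_cast at this; rw [add_assoc]; exact this
    have key : ((p (l+1) (m+1) - 1) * q (l+1) (m+1) + (a1 + (l:ℂ) + 1))
          * ((p l (m+1) - 1) * q l (m+1))
        = ((p l m - 1) * q l m + (a1 + (l:ℂ)))
          * ((p (l+1) m - 1) * q (l+1) m) := by
      linear_combination (p l m - 1) * K2
        - ((p (l+1) (m+1) - 1) * q (l+1) (m+1) + (a1 + (l:ℂ) + 1)) * K3
        - (p (l+1) m - 1) * K1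
    rw [hu (l+1) (m+1), hu l (m+1), hu l m, hu (l+1) m]
    have hA2' : a1 + ((l:ℂ) + 1) ≠ 0 := by rw [← add_assoc]; exact hA2
    push_cast
    field_simp [hA1, hA2']
    linear_combination key
  · intro hB u hu l m
    have Kb3 : q m (l+1) * (p m l * q m l + (a2 + (l:ℂ))) = -t * p m l := by
      rw [hR3 m l]; exact div_mul_cancel₀ _ (hden2 m l)
    have Kb3' : q (m+1) (l+1) * (p (m+1) l * q (m+1) l + (a2 + (l:ℂ))) = -t * p (m+1) l := by
      rw [hR3 (m+1) l]; exact div_mul_cancel₀ _ (hden2 (m+1) l)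
    have Kb2 : p (m+1) l * (q (m+1) l)^2 = -t * p m l - (a2 + (l:ℂ)) * q (m+1) l := by
      have h := hR2 m l
      field_simp [hq (m+1) l] at h
      have h3 : p (m+1) l * (q (m+1) l)^2 * q (m+1) l
          = (-t * p m l - (a2 + (l:ℂ)) * q (m+1) l) * q (m+1) l := by linear_combination q (m+1) l * h
      exact mul_right_cancel₀ (hq (m+1) l) h3
    have Kb2' : p (m+1) (l+1) * (q (m+1) (l+1))^2
        = -t * p m (l+1) - (a2 + (l:ℂ) + 1) * q (m+1) (l+1) := by
      have h := hR2 m (l+1)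
      push_cast at h
      field_simp [hq (m+1) (l+1)] at h
      have h3 : p (m+1) (l+1) * (q (m+1) (l+1))^2 * q (m+1) (l+1)
          = (-t * p m (l+1) - (a2 + (l:ℂ) + 1) * q (m+1) (l+1)) * q (m+1) (l+1) := by
        linear_combination q (m+1) (l+1) * h
      exact mul_right_cancel₀ (hq (m+1) (l+1)) h3
    have Kkey3 : q (m+1) (l+1) * p m l = p (m+1) l * q (m+1) l := by
      have h : t * (q (m+1) (l+1) * p m l) = t * (p (m+1) l * q (m+1) l) := by
        linear_combination q (m+1) (l+1) * Kb2 - q (m+1) l * Kb3'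
      exact mul_left_cancel₀ ht h
    have hB1 := hB l
    have hB2 : a2 + (l:ℂ) + 1 ≠ 0 := by
      have := hB (l+1); push_cast at this; rw [add_assoc]; exact this
    have keyb : (p (m+1) (l+1) * q (m+1) (l+1) + (a2 + (l:ℂ) + 1)) * (p (m+1) l * q (m+1) l)
        = (p m l * q m l + (a2 + (l:ℂ))) * (p m (l+1) * q m (l+1)) := by
      linear_combination p m l * Kb2'
        - (p (m+1) (l+1) * q (m+1) (l+1) + (a2 + (l:ℂ) + 1)) * Kkey3
        - p m (l+1) * Kb3
    rw [hu (l+1) (m+1), hu l (m+1), hu l m, hu (l+1) m]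
    have hB2' : a2 + ((l:ℂ) + 1) ≠ 0 := by rw [← add_assoc]; exact hB2
    push_cast
    field_simp [hB1, hB2']
    linear_combination keyb
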